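/- Every value in the inductively defined invariant set Inv of the error monad transformer satisfies the right unit law: if m ∈ Inv then bindET m unitET = m, where Inv is the least set containing unitET a, throwET e, liftET t, ⊥, closed under bindET and catchET with bodies in Inv, and closed under lubs of chains. -/

import Mathlib

open OmegaCompletePartialOrder

universe u

namespace OmegaCompletePartialOrder

/-- `Continuous'` as defined in the older Mathlib (removed since): `f` is monotone and
preserves `ωSup` of chains. -/
def Continuous' {α β : Type*} [OmegaCompletePartialOrder α] [OmegaCompletePartialOrder β]
    (f : α → β) : Prop :=
  ∃ hf : Monotone f, ∀ c : Chain α, (⟨f, hf⟩ : α →o β) (ωSup c) = ωSup (c.map ⟨f, hf⟩)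

end OmegaCompletePartialOrder

/-- The error type `Error ε α` as a flat domain with bottom, `Err`, and `Ok`. -/
inductive ErrorV (ε α : Type u) : Type u
  | bot : ErrorV ε α
  | err : ε → ErrorV ε α
  | ok : α → ErrorV ε α

/-- Flat order on `ErrorV`. -/
instance {ε α : Type u} : PartialOrder (ErrorV ε α) where
  le x y := x = ErrorV.bot ∨ x = y
  le_refl _ := Or.inr rfl
  le_trans x y z h1 h2 := by rcases h1 with h | h <;> rcases h2 with h' | h' <;> simp_all
  le_antisymm x y h1 h2 := by rcases h1 with h | h <;> rcases h2 with h' | h' <;> simp_all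

instance {ε α : Type u} : OrderBot (ErrorV ε α) where
  bot := ErrorV.bot
  bot_le _ := Or.inl rfl

/-- The strict case analysis `R(k)` used in the definition of `bindET`. -/
def Rfun {T : Type u → Type u}
    [∀ γ, OmegaCompletePartialOrder (T γ)] [∀ γ, OrderBot (T γ)]
    (ret : ∀ {γ : Type u}, γ → T γ)
    {ε α δ : Type u} (k : α → T (ErrorV ε δ)) :
    ErrorV ε α → T (ErrorV ε δ)
  | ErrorV.bot => ⊥
  | ErrorV.err e => ret (ErrorV.err e)
  | ErrorV.ok a => k a

/-- Bind of the error monad transformer: `bindET m k = m >>=τ R(k)`. -/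
def bindET {T : Type u → Type u}
    [∀ γ, OmegaCompletePartialOrder (T γ)] [∀ γ, OrderBot (T γ)]
    (ret : ∀ {γ : Type u}, γ → T γ)
    (bind : ∀ {γ δ : Type u}, T γ → (γ → T δ) → T δ)
    {ε α δ : Type u} (m : T (ErrorV ε α)) (k : α → T (ErrorV ε δ)) :
    T (ErrorV ε δ) :=
  bind m (Rfun ret k)

/-- The inductively defined invariant set for the error monad transformer: it
contains `unitET a`, `throwET e`, `liftET t`, and `⊥`, and is closed under
`bindET` and `catchET` (with bodies in the set) and under lubs of chains. -/
inductive InvET {T : Type u → Type u}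
    [∀ γ, OmegaCompletePartialOrder (T γ)] [∀ γ, OrderBot (T γ)]
    (ret : ∀ {γ : Type u}, γ → T γ)
    (bind : ∀ {γ δ : Type u}, T γ → (γ → T δ) → T δ)
    {ε α : Type u} : T (ErrorV ε α) → Prop
  | unit (a : α) : InvET ret bind (ret (ErrorV.ok a))
  | throw (e : ε) : InvET ret bind (ret (ErrorV.err e))
  | lift (t : T α) : InvET ret bind (bind t fun a => ret (ErrorV.ok a))
  | bind' (m : T (ErrorV ε α)) (k : α → T (ErrorV ε α)) :
      InvET ret bind m → (∀ a, InvET ret bind (k a)) →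
      InvET ret bind (bindET (fun {_} a => ret a) (fun {_ _} m k => bind m k) m k)
  | catch' (m : T (ErrorV ε α)) (h : ε → T (ErrorV ε α)) :
      InvET ret bind m → (∀ e, InvET ret bind (h e)) →
      InvET ret bind (bind m fun x =>
        match x with
        | ErrorV.bot => ⊥
        | ErrorV.err e => h e
        | ErrorV.ok a => ret (ErrorV.ok a))
  | bot : InvET ret bind ⊥
  | sup (c : OmegaCompletePartialOrder.Chain (T (ErrorV ε α))) :
      (∀ n, InvET ret bind (c n)) → InvET ret bind (ωSup c)

/-- Every value in the invariant set of the error monad transformer satisfies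
the right unit law. -/
theorem bindET_right_unit_of_invariant {T : Type u → Type u}
    [∀ γ, OmegaCompletePartialOrder (T γ)] [∀ γ, OrderBot (T γ)]
    (ret : ∀ {γ : Type u}, γ → T γ)
    (bind : ∀ {γ δ : Type u}, T γ → (γ → T δ) → T δ)
    (hleft : ∀ {γ δ : Type u} (a : γ) (k : γ → T δ), bind (ret a) k = k a)
    (hright : ∀ {γ : Type u} (m : T γ), bind m ret = m)
    (hassoc : ∀ {γ δ φ : Type u} (m : T γ) (h : γ → T δ) (k : δ → T φ),
        bind (bind m h) k = bind m fun x => bind (h x) k)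
    (hstrict : ∀ {γ δ : Type u} [PartialOrder γ] [OrderBot γ] (k : γ → T δ),
        k ⊥ = ⊥ → bind (⊥ : T γ) k = ⊥)
    (hcont : ∀ {γ δ : Type u} (k : γ → T δ),
        OmegaCompletePartialOrder.Continuous' (fun m => bind m k))
    {ε α : Type u} (m : T (ErrorV ε α))
    (hm : InvET ret bind m) :
    bindET (fun {_} a => ret a) (fun {_ _} m k => bind m k) m
      (fun a => ret (ErrorV.ok a)) = m := by
  induction hm with
  | unit a => simp [bindET, Rfun, hleft]
  | throw e => simp [bindET, Rfun, hleft]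
  | lift t => simp only [bindET, hassoc, hleft]; rfl
  | bind' m k hmInv hkInv ihm ihk =>
      simp only [bindET] at *
      rw [hassoc]
      congr 1
      funext x
      cases x with
      | bot =>
          exact hstrict _ (by rfl)
      | err e => exact hleft _ _
      | ok a => exact ihk a
  | catch' m h hmInv hhInv ihm ihh =>
      simp only [bindET] at *
      rw [hassoc]
      congr 1
      funext x
      cases x with
      | bot =>
          exact hstrict _ (by rfl)
      | err e => exact ihh e
      | ok a => exact hleft _ _
  | bot =>
      exact hstrict _ (by rfl)
  | sup c hc ih =>
      obtain ⟨mono, cont⟩ := hcont (Rfun (fun {_} a => ret a) (fun a => ret (ErrorV.ok a)) : ErrorV ε α → T (ErrorV ε α))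
      show bind (ωSup c) _ = _
      have := cont c
      simp only [OrderHom.coe_mk] at this
      rw [this]
      apply congrArg ωSup
      apply Chain.ext
      funext n
      exact ih n
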